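/- Suppose Z* ∈ ℝ^{n×k} satisfies ν₁ ≤ λ_k(n^{-1} Z*^T Z*) for some ν₁ > 0 (λ_k = smallest eigenvalue). Then for any Z ∈ ℝ^{n×k}, min over orthogonal O ∈ ℝ^{k×k} of ‖Z - Z* O‖_F ≤ (1/(√(2(√2 - 1)) · √(n ν₁))) · ‖Z Z^T - Z* Z*^T‖_F. -/

import Mathlib

open Matrix

/-- The singular values of a real matrix: square roots of the eigenvalues of `AᴴA`. -/
noncomputable def singVals {m n : ℕ} (A : Matrix (Fin m) (Fin n) ℝ) : Fin n → ℝ :=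
  fun i => Real.sqrt ((show (Aᵀ * A).IsHermitian by
    simpa using Matrix.isHermitian_conjTranspose_mul_self A).eigenvalues i)

/-- Frobenius norm. -/
noncomputable def frobNorm {m n : ℕ} (A : Matrix (Fin m) (Fin n) ℝ) : ℝ :=
  Real.sqrt ((Aᵀ * A).trace)

section Aux


lemma exists_trace_maximizer (k : ℕ) (A : Matrix (Fin k) (Fin k) ℝ) :
    ∃ O : Matrix (Fin k) (Fin k) ℝ, Oᵀ * O = 1 ∧
      ∀ Q : Matrix (Fin k) (Fin k) ℝ, Qᵀ * Q = 1 → (Qᵀ * A).trace ≤ (Oᵀ * A).trace := by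
  have hS : IsCompact {O : Matrix (Fin k) (Fin k) ℝ | Oᵀ * O = 1} := by
    have hK : IsCompact (Set.univ.pi fun _ : Fin k => Set.univ.pi fun _ : Fin k =>
        Set.Icc (-1:ℝ) 1 : Set (Matrix (Fin k) (Fin k) ℝ)) :=
      isCompact_univ_pi (fun i => isCompact_univ_pi (fun j => isCompact_Icc))
    apply IsCompact.of_isClosed_subset hK
    · exact isClosed_eq ((continuous_id.matrix_transpose).matrix_mul continuous_id)
        continuous_const
    · intro (O : Matrix (Fin k) (Fin k) ℝ) hO
      have hO' : Oᵀ * O = 1 := hO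
      refine Set.mem_univ_pi.2 fun i => Set.mem_univ_pi.2 fun j => Set.mem_Icc.2 ?_
      have h1 : (Oᵀ * O) j j = 1 := by rw [hO']; simp
      have h2 : ∑ l, O l j * O l j = 1 := by
        simpa [Matrix.mul_apply, Matrix.transpose_apply] using h1
      have h3 : O i j * O i j ≤ 1 := by
        rw [← h2]
        exact Finset.single_le_sum (f := fun l => O l j * O l j)
          (fun l _ => mul_self_nonneg _) (Finset.mem_univ i)
      constructor <;> nlinarith
  have hne : (1 : Matrix (Fin k) (Fin k) ℝ) ∈ {O : Matrix (Fin k) (Fin k) ℝ | Oᵀ * O = 1} := by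
    simp
  have hcont : Continuous (fun O : Matrix (Fin k) (Fin k) ℝ => (Oᵀ * A).trace) :=
    ((continuous_id.matrix_transpose).matrix_mul continuous_const).matrix_trace
  obtain ⟨O, hO, hmax⟩ := hS.exists_isMaxOn ⟨1, hne⟩ hcont.continuousOn
  exact ⟨O, hO, fun Q hQ => hmax hQ⟩

variable {k : ℕ}

lemma vmv_mul_vmv (u v w z : Fin k → ℝ) :
    vecMulVec u v * vecMulVec w z = (v ⬝ᵥ w) • vecMulVec u z := by
  ext x y
  simp [Matrix.mul_apply, vecMulVec_apply, dotProduct, Finset.sum_mul, Finset.mul_sum]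
  congr 1; ext l; ring

lemma vmv_transpose (u v : Fin k → ℝ) : (vecMulVec u v)ᵀ = vecMulVec v u := by
  ext x y; simp [vecMulVec_apply, mul_comm]

lemma trace_vmv_mul (u w : Fin k → ℝ) (B : Matrix (Fin k) (Fin k) ℝ) :
    (vecMulVec u w * B).trace = w ⬝ᵥ (B *ᵥ u) := by
  simp [Matrix.trace, Matrix.diag, Matrix.mul_apply, vecMulVec_apply, dotProduct, mulVec,
    Finset.mul_sum]
  rw [Finset.sum_comm]
  congr 1; ext x; congr 1; ext y; ring

set_option maxHeartbeats 1000000 in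
lemma maximizer_psd (A O : Matrix (Fin k) (Fin k) ℝ)
    (hO : Oᵀ * O = 1)
    (hmax : ∀ Q : Matrix (Fin k) (Fin k) ℝ, Qᵀ * Q = 1 → (Qᵀ * A).trace ≤ (Oᵀ * A).trace) :
    (Oᵀ * A).PosSemidef := by
  set B := Oᵀ * A with hB
  have key : ∀ R : Matrix (Fin k) (Fin k) ℝ, Rᵀ * R = 1 → (Rᵀ * B).trace ≤ B.trace := by
    intro R hR
    have h1 : ((O * R)ᵀ * (O * R)) = 1 := by
      rw [transpose_mul, mul_assoc, ← mul_assoc Oᵀ O R, hO, one_mul, hR]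
    have h2 := hmax (O * R) h1
    rwa [transpose_mul, mul_assoc, ← hB] at h2
  -- Symmetry
  have hsym : Bᵀ = B := by
    by_contra hns
    obtain ⟨i, hi⟩ : ∃ i, Bᵀ i ≠ B i := Function.ne_iff.mp hns
    obtain ⟨j, hij⟩ : ∃ j, B j i ≠ B i j := by
      obtain ⟨j, hj⟩ := Function.ne_iff.mp hi
      exact ⟨j, by simpa [Matrix.transpose_apply] using hj⟩
    have hne : i ≠ j := by rintro rfl; exact hij rfl
    set a : ℝ := B i i + B j j with ha
    set b : ℝ := B i j - B j i with hb
    have hb0 : b ≠ 0 := sub_ne_zero.mpr (fun h => hij h.symm)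
    set r : ℝ := Real.sqrt (a^2 + b^2) with hr
    have hr0 : 0 < r := Real.sqrt_pos.mpr (by positivity)
    have hr2 : r^2 = a^2 + b^2 := Real.sq_sqrt (by positivity)
    set c : ℝ := a / r with hc
    set s : ℝ := b / r with hs
    have hcs : s * s = 1 - c * c := by
      rw [hc, hs]
      field_simp
      nlinarith [hr2]
    set u : Fin k → ℝ := Pi.single i 1 with hu
    set w : Fin k → ℝ := Pi.single j 1 with hw
    have huu : u ⬝ᵥ u = 1 := by simp [hu]
    have hww : w ⬝ᵥ w = 1 := by simp [hw]
    have huw : u ⬝ᵥ w = 0 := by simp [hu, hw, Pi.single_apply, hne]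
    have hwu : w ⬝ᵥ u = 0 := by simp [hu, hw, Pi.single_apply, hne.symm]
    set P : Matrix (Fin k) (Fin k) ℝ := vecMulVec u u + vecMulVec w w with hP
    set K : Matrix (Fin k) (Fin k) ℝ := vecMulVec u w - vecMulVec w u with hK
    have hPP : P * P = P := by
      simp only [hP, add_mul, mul_add, vmv_mul_vmv, huu, hww, huw, hwu]
      simp
    have hKK : K * K = -P := by
      simp only [hK, hP, sub_mul, mul_sub, vmv_mul_vmv, huu, hww, huw, hwu]
      simp
      abel
    have hPK : P * K = K := by
      simp only [hP, hK, add_mul, mul_sub, vmv_mul_vmv, huu, hww, huw, hwu]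
      simp
    have hKP : K * P = K := by
      simp only [hP, hK, sub_mul, mul_add, vmv_mul_vmv, huu, hww, huw, hwu]
      simp
      abel
    set R : Matrix (Fin k) (Fin k) ℝ := 1 + (c-1) • P + s • K with hR
    have hRT : Rᵀ = 1 + (c-1) • P - s • K := by
      simp [hR, transpose_add, transpose_smul, hP, hK, vmv_transpose]
      module
    have hortho : Rᵀ * R = 1 := by
      rw [hRT, hR]
      simp only [add_mul, sub_mul, mul_add, one_mul, mul_one, smul_mul_assoc, mul_smul_comm,
        smul_smul, hPP, hKK, hPK, hKP, smul_neg, neg_neg, smul_add, smul_sub]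
      rw [hcs]
      module
    have htr := key R hortho
    have htrP : (P * B).trace = a := by
      simp [hP, add_mul, trace_add, trace_vmv_mul, hu, hw, ha, mulVec_single,
        dotProduct_single, single_dotProduct]
    have htrK : (K * B).trace = -b := by
      simp [hK, sub_mul, trace_sub, trace_vmv_mul, hu, hw, hb, mulVec_single,
        dotProduct_single, single_dotProduct]
    have htr2 : (Rᵀ * B).trace = B.trace + (c-1) * a - s * (-b) := by
      rw [hRT]
      simp only [add_mul, sub_mul, one_mul, smul_mul_assoc, trace_sub, trace_add,
        trace_smul, htrP, htrK]
      simp only [smul_eq_mul]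
      ring
    rw [htr2] at htr
    -- (c-1)*a + s*b ≤ 0, but equals r - a > 0
    have hval : (c-1) * a + s * b = r - a := by
      rw [hc, hs]
      field_simp
      nlinarith [hr2]
    have hra : a < r := by
      have h1 : a ≤ |a| := le_abs_self a
      have h2 : |a| = Real.sqrt (a^2) := (Real.sqrt_sq_eq_abs a).symm
      have h3 : Real.sqrt (a^2) < Real.sqrt (a^2 + b^2) :=
        Real.sqrt_lt_sqrt (by positivity) (by nlinarith [sq_pos_of_ne_zero hb0])
      calc a ≤ |a| := h1
        _ = Real.sqrt (a^2) := h2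
        _ < r := h3
    have h9 : (c-1) * a - s * (-b) ≤ 0 := by linarith
    have h10 : (c-1) * a + s * b = (c-1) * a - s * (-b) := by ring
    rw [← h10] at h9
    rw [hval] at h9
    linarith
  have hherm : B.IsHermitian := by
    rw [Matrix.IsHermitian, conjTranspose_eq_transpose_of_trivial, hsym]
  -- PSD
  refine Matrix.PosSemidef.of_dotProduct_mulVec_nonneg hherm fun x => ?_
  rw [star_trivial]
  by_contra hneg
  push_neg at hneg
  have hx0 : x ≠ 0 := by
    rintro rfl
    simp at hneg
  have ht : 0 < x ⬝ᵥ x := by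
    rcases lt_or_eq_of_le (Finset.sum_nonneg fun l _ => mul_self_nonneg (x l) :
      (0:ℝ) ≤ x ⬝ᵥ x) with h | h
    · exact h
    · exact absurd (dotProduct_self_eq_zero.mp h.symm) hx0
  set t : ℝ := x ⬝ᵥ x with htdef
  set H : Matrix (Fin k) (Fin k) ℝ := 1 - (2/t) • vecMulVec x x with hH
  have hHT : Hᵀ = H := by
    simp [hH, transpose_sub, transpose_smul, vmv_transpose]
  have hortho : Hᵀ * H = 1 := by
    rw [hHT, hH]
    simp only [sub_mul, mul_sub, one_mul, mul_one, smul_mul_assoc, mul_smul_comm, smul_smul,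
      vmv_mul_vmv, ← htdef]
    rw [show (2/t * t : ℝ) = 2 from div_mul_cancel₀ 2 ht.ne']
    module
  have htr := key H hortho
  rw [hHT, hH, sub_mul, one_mul, smul_mul_assoc, trace_sub, trace_smul, trace_vmv_mul,
    smul_eq_mul] at htr
  have h2t : 0 < 2/t := by positivity
  nlinarith [mul_pos h2t (neg_pos.mpr hneg)]

lemma trace_transpose_mul_self_nonneg {m k : ℕ} (A : Matrix (Fin m) (Fin k) ℝ) :
    0 ≤ (Aᵀ * A).trace := by
  rw [Matrix.trace]
  apply Finset.sum_nonneg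
  intro i _
  simp only [Matrix.diag_apply, Matrix.mul_apply, Matrix.transpose_apply]
  exact Finset.sum_nonneg fun j _ => mul_self_nonneg _

open scoped MatrixOrder in
lemma trace_mul_nonneg_of_psd {k : ℕ} {D S : Matrix (Fin k) (Fin k) ℝ}
    (hD : D.PosSemidef) (hS : S.PosSemidef) : 0 ≤ (D * S).trace := by
  obtain ⟨A, hA⟩ := CStarAlgebra.nonneg_iff_eq_star_mul_self.mp hD.nonneg
  obtain ⟨C, hC⟩ := CStarAlgebra.nonneg_iff_eq_star_mul_self.mp hS.nonneg
  rw [hA, hC, star_eq_conjTranspose, star_eq_conjTranspose, conjTranspose_eq_transpose_of_trivial, conjTranspose_eq_transpose_of_trivial]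
  calc ((Aᵀ*A)*(Cᵀ*C)).trace = (Aᵀ*(A*(Cᵀ*C))).trace := by rw [Matrix.mul_assoc]
    _ = ((A*(Cᵀ*C))*Aᵀ).trace := trace_mul_comm _ _
    _ = ((A*Cᵀ)*(C*Aᵀ)).trace := by simp only [Matrix.mul_assoc]
    _ = ((C*Aᵀ)ᵀ*(C*Aᵀ)).trace := by rw [transpose_mul, transpose_transpose]
    _ ≥ 0 := trace_transpose_mul_self_nonneg _

lemma trace_four {n k : ℕ} (U V W Y : Matrix (Fin n) (Fin k) ℝ) :
    ((U*Vᵀ)*(W*Yᵀ)).trace = ((Yᵀ*U)*(Vᵀ*W)).trace := by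
  calc ((U*Vᵀ)*(W*Yᵀ)).trace = ((U*(Vᵀ*W))*Yᵀ).trace := by simp only [Matrix.mul_assoc]
    _ = (Yᵀ*(U*(Vᵀ*W))).trace := trace_mul_comm _ _
    _ = ((Yᵀ*U)*(Vᵀ*W)).trace := by simp only [Matrix.mul_assoc]

lemma scalar_id (p2 s2 g2 ps pg sg td sl r : ℝ) (hr : r^2 = 2) :
    (p2 - 2*s2 + g2) - 2*(r-1)*sl*td =
    (p2 + (r-2)^2*s2 + (1-r)^2*g2 + 2*(r-2)*ps + 2*(1-r)*pg + (2*(r-2)*(1-r))*sg)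
    + (4-2*r)*(ps - 2*s2 + sg) + (2*r-2)*((pg - 2*sg + g2) - sl*td) := by
  linear_combination (-(s2 + g2 - 2*sg)) * hr

set_option maxHeartbeats 2000000 in
lemma core_ineq {n k : ℕ} (X Z : Matrix (Fin n) (Fin k) ℝ) (sl : ℝ)
    (hS : (Xᵀ * Z).PosSemidef)
    (hG : (Xᵀ * X - sl • 1).PosSemidef) :
    2 * (Real.sqrt 2 - 1) * sl * ((Z - X)ᵀ * (Z - X)).trace ≤
      ((Z * Zᵀ - X * Xᵀ)ᵀ * (Z * Zᵀ - X * Xᵀ)).trace := by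
  set r := Real.sqrt 2 with hrdef
  have hr : r^2 = 2 := Real.sq_sqrt (by norm_num)
  set P : Matrix (Fin k) (Fin k) ℝ := Zᵀ * Z with hP
  set G : Matrix (Fin k) (Fin k) ℝ := Xᵀ * X with hGd
  set S : Matrix (Fin k) (Fin k) ℝ := Xᵀ * Z with hSd
  have hSsym : Sᵀ = S := by
    rw [← conjTranspose_eq_transpose_of_trivial]
    exact hS.1
  have hZX : Zᵀ * X = S := by rw [← hSsym, hSd, transpose_mul, transpose_transpose]
  have hPsym : Pᵀ = P := by rw [hP, transpose_mul, transpose_transpose]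
  have hGsym : Gᵀ = G := by rw [hGd, transpose_mul, transpose_transpose]
  -- D = (Z-X)ᵀ(Z-X)
  have hD : (Z - X)ᵀ * (Z - X) = P - S - S + G := by
    rw [transpose_sub, Matrix.sub_mul, Matrix.mul_sub, Matrix.mul_sub, ← hP, ← hGd, ← hSd, hZX]
    abel
  have hDpsd : ((Z - X)ᵀ * (Z - X)).PosSemidef := by
    have := posSemidef_conjTranspose_mul_self (Z - X)
    rwa [conjTranspose_eq_transpose_of_trivial] at this
  -- Frobenius of gram difference
  have hE : ((Z * Zᵀ - X * Xᵀ)ᵀ * (Z * Zᵀ - X * Xᵀ)).trace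
      = (P*P).trace - 2*(S*S).trace + (G*G).trace := by
    have h0 : (Z * Zᵀ - X * Xᵀ)ᵀ = Z * Zᵀ - X * Xᵀ := by
      rw [transpose_sub, transpose_mul, transpose_mul, transpose_transpose, transpose_transpose]
    rw [h0]
    simp only [Matrix.sub_mul, Matrix.mul_sub, trace_sub]
    rw [trace_four Z Z Z Z, trace_four Z Z X X, trace_four X X Z Z, trace_four X X X X,
      ← hP, ← hGd, ← hSd, hZX]
    ring
  -- the auxiliary symmetric matrix K = P + (r-2)•S + (1-r)•G
  set K : Matrix (Fin k) (Fin k) ℝ := P + (r-2) • S + (1-r) • G with hK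
  have hKsym : Kᵀ = K := by
    rw [hK, transpose_add, transpose_add, transpose_smul, transpose_smul, hPsym, hSsym, hGsym]
  have hK2 : 0 ≤ (K*K).trace := by
    have := trace_transpose_mul_self_nonneg K
    rwa [hKsym] at this
  have hK2eq : (K*K).trace = (P*P).trace + (r-2)^2*(S*S).trace + (1-r)^2*(G*G).trace
      + 2*(r-2)*(P*S).trace + 2*(1-r)*(P*G).trace + (2*(r-2)*(1-r))*(S*G).trace := by
    rw [hK]
    simp only [add_mul, mul_add, smul_mul_assoc, mul_smul_comm, trace_add, trace_smul,
      smul_eq_mul, smul_smul]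
    rw [trace_mul_comm S P, trace_mul_comm G P, trace_mul_comm G S]
    ring
  -- trace(D*S) and nonneg
  have hDS : ((P - S - S + G) * S).trace
      = (P*S).trace - 2*(S*S).trace + (S*G).trace := by
    simp only [Matrix.sub_mul, Matrix.add_mul, trace_add, trace_sub]
    rw [trace_mul_comm G S]
    ring
  have hDSnn : 0 ≤ ((P - S - S + G) * S).trace := by
    rw [← hD]; exact trace_mul_nonneg_of_psd hDpsd hS
  -- trace(D*(G - sl•1)) and nonneg
  have hDG : ((P - S - S + G) * (G - sl • 1)).trace
      = ((P*G).trace - 2*(S*G).trace + (G*G).trace)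
        - sl * ((P.trace - 2*S.trace + G.trace)) := by
    simp only [Matrix.mul_sub, Matrix.sub_mul, Matrix.add_mul, Matrix.mul_smul, mul_one,
      Matrix.mul_one, trace_add, trace_sub, trace_smul, smul_eq_mul]
    ring
  have hDGnn : 0 ≤ ((P - S - S + G) * (G - sl • 1)).trace := by
    rw [← hD]; exact trace_mul_nonneg_of_psd hDpsd hG
  have htrD : ((Z - X)ᵀ * (Z - X)).trace = P.trace - 2*S.trace + G.trace := by
    rw [hD]; rw [trace_add, trace_sub, trace_sub]; ring
  -- assemble
  have hid := scalar_id (P*P).trace (S*S).trace (G*G).trace (P*S).trace (P*G).trace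
    (S*G).trace (P.trace - 2*S.trace + G.trace) sl r hr
  have h1r : (1:ℝ) ≤ r := by
    rw [hrdef, show (1:ℝ) = Real.sqrt 1 by simp]
    exact Real.sqrt_le_sqrt (by norm_num)
  have h2r : r ≤ 2 := by
    nlinarith [hr, Real.sqrt_nonneg 2, hrdef]
  have hc1 : (0:ℝ) ≤ 4 - 2*r := by linarith
  have hc2 : (0:ℝ) ≤ 2*r - 2 := by linarith
  have hA : 0 ≤ (P*S).trace - 2*(S*S).trace + (S*G).trace := by rw [← hDS]; exact hDSnn
  have hB : 0 ≤ ((P*G).trace - 2*(S*G).trace + (G*G).trace)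
      - sl * ((P.trace - 2*S.trace + G.trace)) := by rw [← hDG]; exact hDGnn
  have hKK : 0 ≤ (P*P).trace + (r-2)^2*(S*S).trace + (1-r)^2*(G*G).trace
      + 2*(r-2)*(P*S).trace + 2*(1-r)*(P*G).trace + (2*(r-2)*(1-r))*(S*G).trace := by
    rw [← hK2eq]; exact hK2
  rw [hE, htrD]
  nlinarith [mul_nonneg hc1 hA, mul_nonneg hc2 hB, hid, hKK]

lemma psd_smul {k : ℕ} {A : Matrix (Fin k) (Fin k) ℝ} (hA : A.PosSemidef) {c : ℝ} (hc : 0 ≤ c) :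
    (c • A).PosSemidef := by
  have h1 : (c • A).IsHermitian := by
    rw [Matrix.IsHermitian, conjTranspose_smul, star_trivial, hA.1.eq]
  refine Matrix.PosSemidef.of_dotProduct_mulVec_nonneg h1 fun x => ?_
  rw [smul_mulVec, dotProduct_smul, smul_eq_mul]
  exact mul_nonneg hc (hA.dotProduct_mulVec_nonneg x)

lemma gram_lower {k : ℕ} {M : Matrix (Fin k) (Fin k) ℝ} (hM : M.IsHermitian) (ν : ℝ)
    (heig : ∀ i, ν ≤ hM.eigenvalues i) : (M - ν • 1).PosSemidef := by
  have h1 : (Matrix.diagonal (fun i => hM.eigenvalues i - ν)).PosSemidef :=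
    Matrix.posSemidef_diagonal_iff.mpr fun i => sub_nonneg.mpr (heig i)
  have h2 := h1.mul_mul_conjTranspose_same (hM.eigenvectorUnitary : Matrix (Fin k) (Fin k) ℝ)
  have h3 : (hM.eigenvectorUnitary : Matrix (Fin k) (Fin k) ℝ) *
      Matrix.diagonal (fun i => hM.eigenvalues i - ν) *
      (hM.eigenvectorUnitary : Matrix (Fin k) (Fin k) ℝ)ᴴ = M - ν • 1 := by
    have hd : Matrix.diagonal (fun i => hM.eigenvalues i - ν)
        = Matrix.diagonal (RCLike.ofReal ∘ hM.eigenvalues) - ν • 1 := by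
      rw [smul_one_eq_diagonal, Matrix.diagonal_sub]
      rfl
    rw [hd, Matrix.mul_sub, Matrix.sub_mul]
    have hu : (hM.eigenvectorUnitary : Matrix (Fin k) (Fin k) ℝ) *
        (hM.eigenvectorUnitary : Matrix (Fin k) (Fin k) ℝ)ᴴ = 1 := by
      have h0 := (Matrix.mem_unitaryGroup_iff).mp hM.eigenvectorUnitary.2
      rwa [Matrix.star_eq_conjTranspose] at h0
    rw [Matrix.mul_smul, Matrix.mul_one, Matrix.smul_mul, hu]
    congr 1
    conv_rhs => rw [hM.spectral_theorem]
    simp only [Unitary.conjStarAlgAut_apply, Unitary.coe_star, Matrix.star_eq_conjTranspose]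
  rwa [h3] at h2

end Aux

/-- Procrustes-type error bound: if all eigenvalues of the symmetric matrix
`n⁻¹ Z*ᵀ Z*` are at least `ν₁ > 0`, then the rotation-aligned Frobenius error of
`Z` is controlled by the Gram matrix error:
`min_O ‖Z - Z* O‖_F ≤ ‖Z Zᵀ - Z* Z*ᵀ‖_F / (√(2(√2-1)) √(n ν₁))`. -/
theorem procrustes_error_bound (n k : ℕ)
    (Zstar Z : Matrix (Fin n) (Fin k) ℝ) (ν₁ : ℝ) (hν : 0 < ν₁)
    (hM : ((n : ℝ)⁻¹ • (Zstarᵀ * Zstar)).IsHermitian)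
    (heig : ∀ i, ν₁ ≤ hM.eigenvalues i) :
    ∃ O : Matrix (Fin k) (Fin k) ℝ, O * Oᵀ = 1 ∧ Oᵀ * O = 1 ∧
      frobNorm (Z - Zstar * O) ≤
        (1 / (Real.sqrt (2 * (Real.sqrt 2 - 1)) * Real.sqrt (n * ν₁))) *
          frobNorm (Z * Zᵀ - Zstar * Zstarᵀ) := by
  rcases Nat.eq_zero_or_pos n with hn | hn
  · subst hn
    refine ⟨(1 : Matrix (Fin k) (Fin k) ℝ), by simp, by simp, ?_⟩
    have hLHS : frobNorm (Z - Zstar * (1 : Matrix (Fin k) (Fin k) ℝ)) = 0 := by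
      rw [frobNorm]
      have h0 : ((Z - Zstar * (1 : Matrix (Fin k) (Fin k) ℝ))ᵀ * (Z - Zstar * (1 : Matrix (Fin k) (Fin k) ℝ))).trace = 0 := by
        rw [Matrix.trace]
        apply Finset.sum_eq_zero
        intro i _
        simp [Matrix.diag_apply, Matrix.mul_apply]
      rw [h0, Real.sqrt_zero]
    rw [hLHS]
    apply mul_nonneg
    · positivity
    · rw [frobNorm]; exact Real.sqrt_nonneg _
  · have hnR : (0:ℝ) < (n:ℝ) := by exact_mod_cast hn
    have hps := gram_lower hM ν₁ heig
    have hGs : (Zstarᵀ * Zstar - ((n:ℝ)*ν₁) • (1 : Matrix (Fin k) (Fin k) ℝ)).PosSemidef := by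
      have h2 := psd_smul hps (le_of_lt hnR)
      have h3 : (n:ℝ) • ((n:ℝ)⁻¹ • (Zstarᵀ * Zstar) - ν₁ • (1 : Matrix (Fin k) (Fin k) ℝ))
          = Zstarᵀ * Zstar - ((n:ℝ)*ν₁) • 1 := by
        rw [smul_sub, smul_smul, smul_smul, mul_inv_cancel₀ hnR.ne', one_smul]
      rwa [h3] at h2
    obtain ⟨O, hO1, hOmax⟩ := exists_trace_maximizer k (Zstarᵀ * Z)
    have hO2 : O * Oᵀ = 1 := mul_eq_one_comm.mp hO1
    refine ⟨O, hO2, hO1, ?_⟩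
    set X := Zstar * O with hX
    have hXZ : Xᵀ * Z = Oᵀ * (Zstarᵀ * Z) := by rw [hX, transpose_mul, Matrix.mul_assoc]
    have hSpsd : (Xᵀ * Z).PosSemidef := by
      have h4 := maximizer_psd (Zstarᵀ * Z) O hO1 hOmax
      rwa [hXZ]
    have hGpsd : (Xᵀ * X - ((n:ℝ)*ν₁) • (1 : Matrix (Fin k) (Fin k) ℝ)).PosSemidef := by
      have h2 := hGs.conjTranspose_mul_mul_same O
      have h3 : Oᴴ * (Zstarᵀ * Zstar - ((n:ℝ)*ν₁) • 1) * O
          = Xᵀ * X - ((n:ℝ)*ν₁) • 1 := by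
        rw [conjTranspose_eq_transpose_of_trivial, Matrix.mul_sub, Matrix.sub_mul, hX,
          transpose_mul]
        congr 1
        · simp only [Matrix.mul_assoc]
        · rw [Matrix.mul_smul, Matrix.mul_one, Matrix.smul_mul, hO1]
      rwa [h3] at h2
    have hcore := core_ineq X Z ((n:ℝ)*ν₁) hSpsd hGpsd
    have hXXT : X * Xᵀ = Zstar * Zstarᵀ := by
      rw [hX, transpose_mul]
      calc Zstar * O * (Oᵀ * Zstarᵀ) = Zstar * (O * Oᵀ) * Zstarᵀ := by
            simp only [Matrix.mul_assoc]
        _ = Zstar * Zstarᵀ := by rw [hO2, Matrix.mul_one]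
    rw [frobNorm, frobNorm, ← hXXT]
    set td := ((Z - X)ᵀ * (Z - X)).trace with htd
    set F := ((Z * Zᵀ - X * Xᵀ)ᵀ * (Z * Zᵀ - X * Xᵀ)).trace with hFd
    have htdnn : 0 ≤ td := trace_transpose_mul_self_nonneg _
    have hFnn : 0 ≤ F := trace_transpose_mul_self_nonneg _
    have hsq2 : (1:ℝ) < Real.sqrt 2 := by
      nlinarith [Real.sq_sqrt (show (0:ℝ) ≤ 2 by norm_num), Real.sqrt_nonneg 2]
    set c := 2 * (Real.sqrt 2 - 1) * ((n:ℝ)*ν₁) with hc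
    have hcpos : 0 < c := by
      apply mul_pos (by linarith) (mul_pos hnR hν)
    have h5 : td ≤ F / c := (le_div_iff₀ hcpos).mpr (by rw [mul_comm]; exact hcore)
    have h6 : Real.sqrt td ≤ Real.sqrt F / Real.sqrt c := by
      have := Real.sqrt_le_sqrt h5
      rwa [Real.sqrt_div hFnn c] at this
    have h7 : Real.sqrt (2 * (Real.sqrt 2 - 1)) * Real.sqrt ((n:ℝ) * ν₁) = Real.sqrt c := by
      rw [hc, ← Real.sqrt_mul (by linarith : (0:ℝ) ≤ 2*(Real.sqrt 2 - 1))]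
    rw [h7]
    have h8 : (1 / Real.sqrt c) * Real.sqrt F = Real.sqrt F / Real.sqrt c := by ring
    rw [h8]
    exact h6
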